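/- With A = θ² - t² (the Bessel operator in θ = t·d/dt), the operators L_k defined by L₀ = 1, L₁ = θ, L_{k+1} = θ∘L_k - k(n-k+1)t²·L_{k-1} have the form L_k = θ^k + Σ_{j=0}^{k-2} a_j^{(k)}(t)·θ^j, where each coefficient a_j^{(k)} is a polynomial in t², divisible by t², with deg_t a_j^{(k)} ≤ k - j. -/
import Mathlib

open Polynomial

/-- Left multiplication by θ in the Weyl-type algebra with relation θ·t = t·θ + t,
acting on operators in normal form Σ pⱼ(t)·θʲ, represented as polynomials in θ
(the outer variable) with coefficients polynomials in t:
θ ∘ (Σ pⱼ θʲ) = Σ pⱼ θ^{j+1} + Σ t·pⱼ'(t) θʲ. -/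
noncomputable def thetaMul (M : Polynomial (Polynomial ℝ)) : Polynomial (Polynomial ℝ) :=
  X * M + M.sum fun j p => C (Polynomial.X * derivative p) * X ^ j

/-- The operators L₀ = 1, L₁ = θ, L_{k+1} = θ∘L_k − k(n−k+1)·t²·L_{k−1}
for the Bessel operator A = θ² − t². -/
noncomputable def Lop (n : ℕ) : ℕ → Polynomial (Polynomial ℝ)
  | 0 => 1
  | 1 => X
  | (k + 2) => thetaMul (Lop n (k + 1))
      - C (Polynomial.C (((k : ℝ) + 1) * ((n : ℝ) - ((k : ℝ) + 1) + 1)) * Polynomial.X ^ 2)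
        * Lop n k

/-- Coefficient-wise property: even polynomial in t, divisible by t², degree ≤ k - j. -/
def GoodCoeff (k j : ℕ) (a : Polynomial ℝ) : Prop :=
  (∃ q : Polynomial ℝ, a = q.comp (Polynomial.X ^ 2)) ∧
  (Polynomial.X ^ 2 ∣ a) ∧ a.natDegree ≤ k - j

lemma goodCoeff_zero (k j : ℕ) : GoodCoeff k j 0 :=
  ⟨⟨0, by simp⟩, dvd_zero _, by simp⟩

lemma goodCoeff_add {k j : ℕ} {a b : Polynomial ℝ} (ha : GoodCoeff k j a)
    (hb : GoodCoeff k j b) : GoodCoeff k j (a + b) := by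
  obtain ⟨⟨qa, hqa⟩, da, na⟩ := ha
  obtain ⟨⟨qb, hqb⟩, db, nb⟩ := hb
  exact ⟨⟨qa + qb, by simp [hqa, hqb]⟩, dvd_add da db,
    le_trans (Polynomial.natDegree_add_le a b) (max_le na nb)⟩

lemma goodCoeff_neg {k j : ℕ} {a : Polynomial ℝ} (ha : GoodCoeff k j a) :
    GoodCoeff k j (-a) := by
  obtain ⟨⟨qa, hqa⟩, da, na⟩ := ha
  exact ⟨⟨-qa, by simp [hqa]⟩, dvd_neg.mpr da, by simpa using na⟩

lemma goodCoeff_shift {k j : ℕ} {a : Polynomial ℝ} (ha : GoodCoeff k j a) :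
    GoodCoeff (k + 1) (j + 1) a := by
  obtain ⟨he, da, na⟩ := ha
  exact ⟨he, da, by omega⟩

lemma goodCoeff_xderiv {k j : ℕ} {a : Polynomial ℝ} (ha : GoodCoeff k j a) :
    GoodCoeff (k + 1) j (Polynomial.X * derivative a) := by
  obtain ⟨⟨q, hq⟩, ⟨b, hb⟩, na⟩ := ha
  refine ⟨⟨Polynomial.C 2 * Polynomial.X * derivative q, ?_⟩,
    ⟨Polynomial.C 2 * b + Polynomial.X * derivative b, ?_⟩, ?_⟩
  · subst hq
    rw [Polynomial.derivative_comp]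
    simp only [mul_comp, C_comp, X_comp, derivative_X_pow]
    push_cast
    ring
  · subst hb
    rw [derivative_mul, derivative_X_pow]
    push_cast
    ring
  · rcases eq_or_ne (derivative a) 0 with h | h
    · simp [h]
    · calc (Polynomial.X * derivative a).natDegree ≤ 1 + (derivative a).natDegree :=
            le_trans (natDegree_mul_le) (by simp)
        _ ≤ k + 1 - j := by
            have h1 : (derivative a).natDegree ≤ a.natDegree - 1 := natDegree_derivative_le a
            have h2 : 1 ≤ a.natDegree := by
              by_contra hc
              push_neg at hc
              have h' : a.natDegree = 0 := by omega
              obtain ⟨d, rfl⟩ := Polynomial.natDegree_eq_zero.mp h'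
              simp at h
            omega

lemma goodCoeff_cx2mul {k j : ℕ} (hjk : j ≤ k) {a : Polynomial ℝ} (c : ℝ)
    (ha : GoodCoeff k j a) :
    GoodCoeff (k + 2) j (Polynomial.C c * Polynomial.X ^ 2 * a) := by
  obtain ⟨⟨q, hq⟩, hd, na⟩ := ha
  refine ⟨⟨Polynomial.C c * Polynomial.X * q, by simp [hq, mul_comp]⟩,
    ⟨Polynomial.C c * a, by ring⟩, ?_⟩
  calc (Polynomial.C c * Polynomial.X ^ 2 * a).natDegree
      ≤ (Polynomial.C c * Polynomial.X ^ 2).natDegree + a.natDegree := natDegree_mul_le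
    _ ≤ 2 + a.natDegree := by
        have : (Polynomial.C c * Polynomial.X ^ 2).natDegree ≤ 2 :=
          le_trans natDegree_mul_le (by simp)
        omega
    _ ≤ k + 2 - j := by omega

lemma goodCoeff_cx2 {k j : ℕ} (h : 2 ≤ k - j) (c : ℝ) :
    GoodCoeff k j (Polynomial.C c * Polynomial.X ^ 2) :=
  ⟨⟨Polynomial.C c * Polynomial.X, by simp [mul_comp]⟩, ⟨Polynomial.C c, by ring⟩,
    le_trans (le_trans natDegree_mul_le (by simp)) h⟩

lemma coeff_thetaMul_sum (M : Polynomial (Polynomial ℝ)) (i : ℕ) :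
    (M.sum fun j p => C (Polynomial.X * derivative p) * X ^ j).coeff i
      = Polynomial.X * derivative (M.coeff i) := by
  rw [Polynomial.coeff_sum, Polynomial.sum]
  simp only [coeff_C_mul, coeff_X_pow, mul_ite, mul_one, mul_zero]
  rw [Finset.sum_ite_eq M.support i]
  split
  · rfl
  · simp_all [Polynomial.notMem_support_iff.mp ‹_›]

lemma coeff_thetaMul_zero (M : Polynomial (Polynomial ℝ)) :
    (thetaMul M).coeff 0 = Polynomial.X * derivative (M.coeff 0) := by
  rw [thetaMul, coeff_add, coeff_thetaMul_sum]
  simp [Polynomial.coeff_X_mul_zero]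

lemma coeff_thetaMul_succ (M : Polynomial (Polynomial ℝ)) (i : ℕ) :
    (thetaMul M).coeff (i + 1) = M.coeff i + Polynomial.X * derivative (M.coeff (i + 1)) := by
  rw [thetaMul, coeff_add, coeff_thetaMul_sum, Polynomial.coeff_X_mul]

/-- Full invariant on the coefficients of `Lop n k`. -/
def LopInv (n k : ℕ) : Prop :=
  (Lop n k).coeff k = 1 ∧
  (∀ j, k < j → (Lop n k).coeff j = 0) ∧
  (∀ j, j + 1 = k → (Lop n k).coeff j = 0) ∧
  (∀ j, j + 1 < k → GoodCoeff k j ((Lop n k).coeff j))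

lemma lopInv (n : ℕ) : ∀ k, LopInv n k
  | 0 => by
      refine ⟨by simp [Lop], ?_, by omega, by omega⟩
      intro j hj
      rw [Lop]
      exact Polynomial.coeff_one.trans (by simp; omega)
  | 1 => by
      refine ⟨by simp [Lop], ?_, ?_, by omega⟩
      · intro j hj; rw [Lop, Polynomial.coeff_X]; simp; omega
      · intro j hj
        have : j = 0 := by omega
        subst this; simp [Lop]
  | (k + 2) => by
      obtain ⟨h1a, h1b, h1c, h1d⟩ := lopInv n (k + 1)
      obtain ⟨h0a, h0b, h0c, h0d⟩ := lopInv n k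
      set c : ℝ := ((k : ℝ) + 1) * ((n : ℝ) - ((k : ℝ) + 1) + 1) with hc
      have hco : ∀ i, (Lop n (k + 2)).coeff i
          = (thetaMul (Lop n (k + 1))).coeff i
            - (Polynomial.C c * Polynomial.X ^ 2) * (Lop n k).coeff i := by
        intro i
        rw [Lop, coeff_sub, coeff_C_mul]
      refine ⟨?_, ?_, ?_, ?_⟩
      · rw [hco, coeff_thetaMul_succ, h1a, h1b _ (by omega), h0b _ (by omega)]
        simp
      · intro j hj
        obtain ⟨i, rfl⟩ : ∃ i, j = i + 1 := ⟨j - 1, by omega⟩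
        rw [hco, coeff_thetaMul_succ, h1b _ (by omega), h1b _ (by omega), h0b _ (by omega)]
        simp
      · intro j hj
        have : j = k + 1 := by omega
        subst this
        rw [hco, coeff_thetaMul_succ, h1a, h1c _ rfl, h0b _ (by omega)]
        simp
      · intro j hj
        rw [hco, sub_eq_add_neg]
        refine goodCoeff_add ?_ (goodCoeff_neg ?_)
        · rcases Nat.eq_zero_or_eq_succ_pred j with h | h
          · subst h
            rw [coeff_thetaMul_zero]
            rcases Nat.lt_or_ge 1 (k + 1) with h' | h'
            · exact goodCoeff_xderiv (h1d 0 h')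
            · have hk : k = 0 := by omega
              subst hk
              rw [h1c 0 rfl]
              simpa using goodCoeff_zero 2 0
          · obtain ⟨i, rfl⟩ : ∃ i, j = i + 1 := ⟨j - 1, h⟩
            rw [coeff_thetaMul_succ]
            refine goodCoeff_add ?_ ?_
            · exact goodCoeff_shift (h1d i (by omega))
            · rcases Nat.lt_or_ge (i + 1 + 1) (k + 1) with h' | h'
              · exact goodCoeff_xderiv (h1d (i + 1) h')
              · have : i + 1 + 1 = k + 1 := by omega
                rw [h1c _ this]
                simpa using goodCoeff_zero (k + 2) (i + 1)
        · rcases Nat.lt_trichotomy (j + 1) k with h' | h' | h'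
          · exact goodCoeff_cx2mul (by omega) c (h0d j h')
          · rw [h0c _ h']
            simpa using goodCoeff_zero (k + 2) j
          · have : j = k := by omega
            subst this
            rw [h0a, mul_one]
            exact goodCoeff_cx2 (by omega) c

lemma decomp (M : Polynomial (Polynomial ℝ)) (k : ℕ)
    (h1 : M.coeff k = 1) (h2 : ∀ j, k < j → M.coeff j = 0)
    (h3 : ∀ j, j + 1 = k → M.coeff j = 0) :
    M = X ^ k + ∑ j ∈ Finset.range (k - 1), C (M.coeff j) * X ^ j := by
  apply Polynomial.ext
  intro i
  rw [coeff_add, Polynomial.finset_sum_coeff]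
  simp only [coeff_C_mul, coeff_X_pow, mul_ite, mul_one, mul_zero]
  rw [Finset.sum_ite_eq (Finset.range (k - 1)) i]
  simp only [Finset.mem_range]
  rcases Nat.lt_trichotomy i k with h | h | h
  · rcases Nat.lt_or_ge i (k - 1) with h' | h'
    · simp [if_pos h', if_neg (by omega : ¬ i = k)]
    · have : i + 1 = k := by omega
      rw [h3 i this, if_neg (by omega : ¬ i = k), if_neg (by omega : ¬ i < k - 1)]
      simp
  · subst h
    rw [h1, if_pos rfl, if_neg (by omega : ¬ i < i - 1)]
    simp
  · rw [h2 i h, if_neg (by omega : ¬ i = k), if_neg (by omega : ¬ i < k - 1)]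
    simp

theorem Lop_closed_form (n : ℕ) (hn : 1 ≤ n) :
    ∀ k ≤ n + 1, ∃ a : ℕ → Polynomial ℝ,
      Lop n k = X ^ k + ∑ j ∈ Finset.range (k - 1), C (a j) * X ^ j ∧
      ∀ j < k - 1,
        (∃ q : Polynomial ℝ, a j = q.comp (Polynomial.X ^ 2)) ∧
        (Polynomial.X ^ 2 ∣ a j) ∧
        (a j).natDegree ≤ k - j := by
  intro k _
  obtain ⟨h1, h2, h3, h4⟩ := lopInv n k
  exact ⟨fun j => (Lop n k).coeff j, decomp _ k h1 h2 h3, fun j hj => h4 j (by omega)⟩
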